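/- Tsallis-entropy-regularized optimization (ent-max lemma): let 0 ≤ q < 1, λ > 0, and let Q : ℝ^m → ℝ be measurable. Suppose C ∈ ℝ is such that φ*(u) := exp_q(-(1/λ)Q(u) + C) satisfies ∫ φ*(u) du = 1 and ∫ |Q(u)| φ*(u) du < ∞. Then for every probability density φ on ℝ^m with ∫ |Q| φ < ∞ and finite deformed q-entropy, J(φ) := ∫ Q(u) φ(u) du - λ H_q(φ) ≥ J(φ*), with equality if and only if φ = φ* almost everywhere. -/

import Mathlib

open Real MeasureTheory

/-- The `q`-exponential: `exp_q(x) = [1 + (1-q)x]_+ ^ (1/(1-q))`. -/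
noncomputable def qexp (q x : ℝ) : ℝ := (max (1 + (1 - q) * x) 0) ^ (1 / (1 - q))

/-- The `q`-logarithm: `log_q(x) = (x^(1-q) - 1)/(1-q)` (for `x > 0`). -/
noncomputable def qlog (q x : ℝ) : ℝ := (x ^ (1 - q) - 1) / (1 - q)

/-- The deformed `q`-entropy of a density `φ` on `ℝᵐ`:
`H_q(φ) = -(1/(2-q))(∫ φ log_q φ - 1)`. -/
noncomputable def deformedEntropy {m : ℕ} (q : ℝ) (φ : (Fin m → ℝ) → ℝ) : ℝ :=
  -(1 / (2 - q)) * ((∫ u : Fin m → ℝ, φ u * qlog q (φ u)) - 1)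

/-- The Tsallis-entropy-regularized objective `J(φ) = ∫ Q φ - λ H_q(φ)`. -/
noncomputable def Jreg {m : ℕ} (q lam : ℝ) (Q φ : (Fin m → ℝ) → ℝ) : ℝ :=
  (∫ u : Fin m → ℝ, Q u * φ u) - lam * deformedEntropy q φ

lemma tangent_lt {p a b : ℝ} (hp : 1 < p) (ha : 0 ≤ a) (hb : 0 < b) (hab : a ≠ b) :
    b ^ p + p * (b ^ (p - 1) * (a - b)) < a ^ p := by
  have hs : (-1 : ℝ) ≤ a / b - 1 := by
    have : 0 ≤ a / b := div_nonneg ha hb.le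
    linarith
  have hs' : a / b - 1 ≠ 0 := by
    intro h
    have : a / b = 1 := by linarith
    exact hab (by field_simp at this; linarith)
  have key := one_add_mul_self_lt_rpow_one_add hs hs' hp
  rw [show (1 : ℝ) + (a / b - 1) = a / b by ring, Real.div_rpow ha hb.le] at key
  have hbp : 0 < b ^ p := Real.rpow_pos_of_pos hb p
  have h2 : (1 + p * (a / b - 1)) * b ^ p < a ^ p := (lt_div_iff₀ hbp).mp key
  have h3 : b ^ p + p * (b ^ (p - 1) * (a - b)) = (1 + p * (a / b - 1)) * b ^ p := by
    rw [Real.rpow_sub_one hb.ne' p]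
    field_simp
  linarith

lemma tangent_le {p a b : ℝ} (hp : 1 < p) (ha : 0 ≤ a) (hb : 0 < b) :
    b ^ p + p * (b ^ (p - 1) * (a - b)) ≤ a ^ p := by
  rcases eq_or_ne a b with rfl | hab
  · simp
  · exact (tangent_lt hp ha hb hab).le

lemma key_pointwise (q lam C Qu a : ℝ) (hq1 : q < 1) (hlam : 0 < lam) (ha : 0 ≤ a) :
    0 ≤ (Qu - (lam * C + lam / (2 - q))) * (a - qexp q (-(1 / lam) * Qu + C)) +
        lam / (2 - q) * (a * qlog q a -
          qexp q (-(1 / lam) * Qu + C) * qlog q (qexp q (-(1 / lam) * Qu + C))) ∧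
    ((Qu - (lam * C + lam / (2 - q))) * (a - qexp q (-(1 / lam) * Qu + C)) +
        lam / (2 - q) * (a * qlog q a -
          qexp q (-(1 / lam) * Qu + C) * qlog q (qexp q (-(1 / lam) * Qu + C))) = 0 →
      a = qexp q (-(1 / lam) * Qu + C)) := by
  have h1q : (0:ℝ) < 1 - q := by linarith
  have h2q : (0:ℝ) < 2 - q := by linarith
  have hp : (1:ℝ) < 2 - q := by linarith
  set x : ℝ := 1 + (1 - q) * (-(1 / lam) * Qu + C) with hxdef
  set b : ℝ := qexp q (-(1 / lam) * Qu + C) with hbdef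
  rcases lt_or_ge 0 x with hx | hx
  · -- positive case
    have hb : b = x ^ (1 / (1 - q)) := by
      rw [hbdef]; unfold qexp; rw [← hxdef, max_eq_left hx.le]
    have hbpos : 0 < b := hb ▸ Real.rpow_pos_of_pos hx _
    have hB : b ^ (1 - q) = x := by
      rw [hb, ← Real.rpow_mul hx.le, one_div, inv_mul_cancel₀ h1q.ne', Real.rpow_one]
    have hQu : Qu = lam * C - lam * (b ^ (1 - q) - 1) / (1 - q) := by
      rw [hB, hxdef]
      field_simp
      ring
    have htan := tangent_le hp ha hbpos
    rw [show (2:ℝ) - q - 1 = 1 - q by ring] at htan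
    have hra : a ^ ((2:ℝ) - q) = a ^ (1 - q) * a := by
      rcases eq_or_lt_of_le ha with rfl | ha'
      · rw [Real.zero_rpow h2q.ne', mul_zero]
      · rw [show (2:ℝ) - q = (1 - q) + 1 by ring, Real.rpow_add ha', Real.rpow_one]
    have hrb : b ^ ((2:ℝ) - q) = b ^ (1 - q) * b := by
      rw [show (2:ℝ) - q = (1 - q) + 1 by ring, Real.rpow_add hbpos, Real.rpow_one]
    rw [hra, hrb] at htan
    have hE : (Qu - (lam * C + lam / (2 - q))) * (a - b) +
        lam / (2 - q) * (a * qlog q a - b * qlog q b) =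
        lam / ((2 - q) * (1 - q)) *
          (a ^ (1 - q) * a - (b ^ (1 - q) * b + (2 - q) * (b ^ (1 - q) * (a - b)))) := by
      unfold qlog
      rw [hQu]
      field_simp
      ring
    rw [hE]
    have hc : 0 < lam / ((2 - q) * (1 - q)) := div_pos hlam (mul_pos h2q h1q)
    constructor
    · exact mul_nonneg hc.le (by linarith)
    · intro h0
      by_contra hab
      have := tangent_lt hp ha hbpos hab
      rw [show (2:ℝ) - q - 1 = 1 - q by ring, hra, hrb] at this
      nlinarith
  · -- b = 0 case
    have hb0 : b = 0 := by
      rw [hbdef]; unfold qexp; rw [← hxdef, max_eq_right hx,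
        Real.zero_rpow (one_div_ne_zero h1q.ne')]
    have hQu : lam * C + lam / (1 - q) ≤ Qu := by
      have h5 : (1 - q) * (-(1 / lam) * Qu + C) ≤ -1 := by
        rw [hxdef] at hx; linarith
      have h6 : -(1 / lam) * Qu + C ≤ -1 / (1 - q) := by
        rw [le_div_iff₀ h1q]; linarith
      have h7 : lam * (-(1 / lam) * Qu + C) ≤ lam * (-1 / (1 - q)) :=
        mul_le_mul_of_nonneg_left h6 hlam.le
      have h8 : lam * (-(1 / lam) * Qu + C) = -Qu + lam * C := by
        field_simp
      have h9 : lam * (-1 / (1 - q)) = -(lam / (1 - q)) := by ring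
      rw [h8, h9] at h7
      linarith
    have hcoef : lam / ((2 - q) * (1 - q)) ≤ Qu - (lam * C + lam / (2 - q)) := by
      have : lam / (1 - q) - lam / (2 - q) = lam / ((2 - q) * (1 - q)) := by
        rw [div_sub_div _ _ h1q.ne' h2q.ne', show lam * (2 - q) - (1 - q) * lam = lam by ring,
          mul_comm (1 - q)]
      linarith
    have hE : (Qu - (lam * C + lam / (2 - q))) * (a - b) +
        lam / (2 - q) * (a * qlog q a - b * qlog q b) =
        (Qu - (lam * C + lam / (2 - q))) * a +
          lam / ((2 - q) * (1 - q)) * (a ^ (1 - q) * a - a) := by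
      rw [hb0]
      unfold qlog
      simp only [zero_mul, mul_zero, sub_zero]
      rw [show lam / ((2 - q) * (1 - q)) = lam / (2 - q) / (1 - q) from (div_div _ _ _).symm]
      ring
    rw [hE]
    have hc : 0 < lam / ((2 - q) * (1 - q)) := div_pos hlam (mul_pos h2q h1q)
    have hAa : 0 ≤ a ^ (1 - q) * a := mul_nonneg (Real.rpow_nonneg ha _) ha
    have k1 : lam / ((2 - q) * (1 - q)) * a ≤ (Qu - (lam * C + lam / (2 - q))) * a :=
      mul_le_mul_of_nonneg_right hcoef ha
    constructor
    · nlinarith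
    · intro h0
      by_contra hab
      rw [hb0] at hab
      have ha' : 0 < a := lt_of_le_of_ne ha (Ne.symm hab)
      have hApos : 0 < a ^ (1 - q) := Real.rpow_pos_of_pos ha' _
      nlinarith [mul_pos hc (mul_pos hApos ha'), k1,
        mul_sub (lam / ((2 - q) * (1 - q))) (a ^ (1 - q) * a) a]

lemma qexp_mul_qlog (q y : ℝ) (hq1 : q < 1) :
    qexp q y * qlog q (qexp q y) = y * qexp q y := by
  have h1q : (0:ℝ) < 1 - q := by linarith
  rcases lt_or_ge 0 (1 + (1 - q) * y) with hx | hx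
  · have hb : qexp q y = (1 + (1 - q) * y) ^ (1 / (1 - q)) := by
      unfold qexp; rw [max_eq_left hx.le]
    have hB : qexp q y ^ (1 - q) = 1 + (1 - q) * y := by
      rw [hb, ← Real.rpow_mul hx.le, one_div, inv_mul_cancel₀ h1q.ne', Real.rpow_one]
    unfold qlog
    rw [hB]
    field_simp
    ring
  · have hb : qexp q y = 0 := by
      unfold qexp; rw [max_eq_right hx, Real.zero_rpow (one_div_ne_zero h1q.ne')]
    rw [hb, zero_mul, mul_zero]

/-- Ent-max lemma: `φ*(u) = exp_q(-(1/λ)Q(u) + C)` minimizes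
`J(φ) = ∫ Q φ - λ H_q(φ)` over probability densities, uniquely up to null sets. -/
theorem entmax_minimizer {m : ℕ} (q lam : ℝ) (hq0 : 0 ≤ q) (hq1 : q < 1)
    (hlam : 0 < lam) (Q : (Fin m → ℝ) → ℝ) (hQ : Measurable Q) (C : ℝ)
    (hnorm : (∫ u : Fin m → ℝ, qexp q (-(1 / lam) * Q u + C)) = 1)
    (hint : Integrable fun u : Fin m → ℝ => |Q u| * qexp q (-(1 / lam) * Q u + C)) :
    ∀ φ : (Fin m → ℝ) → ℝ, Measurable φ → (∀ u, 0 ≤ φ u) →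
      (∫ u : Fin m → ℝ, φ u) = 1 →
      (Integrable fun u => |Q u| * φ u) →
      (Integrable fun u => φ u * qlog q (φ u)) →
      Jreg q lam Q (fun u => qexp q (-(1 / lam) * Q u + C)) ≤ Jreg q lam Q φ ∧
        (Jreg q lam Q φ = Jreg q lam Q (fun u => qexp q (-(1 / lam) * Q u + C)) ↔
          φ =ᵐ[volume] fun u => qexp q (-(1 / lam) * Q u + C)) := by
  intro φ hφm hφ0 hφ1 hφQ hφf
  have h1q : (0:ℝ) < 1 - q := by linarith
  have h2q : (0:ℝ) < 2 - q := by linarith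
  set ψ : (Fin m → ℝ) → ℝ := fun u => qexp q (-(1 / lam) * Q u + C) with hψdef
  have hψ0 : ∀ u, 0 ≤ ψ u := fun u => Real.rpow_nonneg (le_max_right _ _) _
  have hψm : Measurable ψ := by
    unfold ψ; unfold qexp; fun_prop
  have intψ : Integrable ψ := by
    by_contra hc
    rw [integral_undef hc] at hnorm
    exact zero_ne_one hnorm
  have intφ : Integrable φ := by
    by_contra hc
    rw [integral_undef hc] at hφ1
    exact zero_ne_one hφ1
  have intQψ : Integrable fun u => Q u * ψ u := by
    refine hint.mono' ((hQ.mul hψm).aestronglyMeasurable) ?_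
    filter_upwards with u
    rw [Real.norm_eq_abs, abs_mul, abs_of_nonneg (hψ0 u)]
  have intQφ : Integrable fun u => Q u * φ u := by
    refine hφQ.mono' ((hQ.mul hφm).aestronglyMeasurable) ?_
    filter_upwards with u
    rw [Real.norm_eq_abs, abs_mul, abs_of_nonneg (hφ0 u)]
  have intfψ : Integrable fun u => ψ u * qlog q (ψ u) := by
    have heq : (fun u => ψ u * qlog q (ψ u)) =
        fun u => -(1 / lam) * (Q u * ψ u) + C * ψ u := by
      funext u
      rw [qexp_mul_qlog q _ hq1]
      ring
    rw [heq]
    exact (intQψ.const_mul _).add (intψ.const_mul _)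
  set K : ℝ := lam * C + lam / (2 - q) with hKdef
  set h : (Fin m → ℝ) → ℝ := fun u =>
    (Q u - K) * (φ u - ψ u) +
      lam / (2 - q) * (φ u * qlog q (φ u) - ψ u * qlog q (ψ u)) with hhdef
  have hpt : ∀ u, 0 ≤ h u ∧ (h u = 0 → φ u = ψ u) := fun u =>
    key_pointwise q lam C (Q u) (φ u) hq1 hlam (hφ0 u)
  have hcombo : h = fun u =>
      (Q u * φ u - Q u * ψ u) - (K * φ u - K * ψ u) +
        (lam / (2 - q) * (φ u * qlog q (φ u)) - lam / (2 - q) * (ψ u * qlog q (ψ u))) := by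
    funext u; simp only [hhdef]; ring
  have iA : Integrable (fun u => Q u * φ u - Q u * ψ u) := intQφ.sub intQψ
  have iB : Integrable (fun u => K * φ u - K * ψ u) := (intφ.const_mul K).sub (intψ.const_mul K)
  have iC : Integrable (fun u => lam / (2 - q) * (φ u * qlog q (φ u)) -
      lam / (2 - q) * (ψ u * qlog q (ψ u))) := (hφf.const_mul _).sub (intfψ.const_mul _)
  have iAB : Integrable (fun u => Q u * φ u - Q u * ψ u - (K * φ u - K * ψ u)) := iA.sub iB
  have inth : Integrable h := by
    rw [hcombo]
    exact iAB.add iC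
  have hI : ∫ u, h u = Jreg q lam Q φ - Jreg q lam Q ψ := by
    have e1 : ∫ u, h u =
        ((∫ u, Q u * φ u) - ∫ u, Q u * ψ u) - (K * (∫ u, φ u) - K * ∫ u, ψ u) +
          (lam / (2 - q) * (∫ u, φ u * qlog q (φ u)) -
            lam / (2 - q) * ∫ u, ψ u * qlog q (ψ u)) := by
      rw [hcombo, integral_add iAB iC, integral_sub iA iB, integral_sub intQφ intQψ,
        integral_sub (intφ.const_mul K) (intψ.const_mul K),
        integral_sub (hφf.const_mul _) (intfψ.const_mul _),
        integral_const_mul, integral_const_mul, integral_const_mul, integral_const_mul]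
    rw [e1, hφ1, hnorm]
    unfold Jreg deformedEntropy
    ring
  have hle : Jreg q lam Q ψ ≤ Jreg q lam Q φ := by
    have h0 : 0 ≤ ∫ u, h u := integral_nonneg fun u => (hpt u).1
    linarith [hI]
  refine ⟨hle, ?_, ?_⟩
  · intro heq
    have h0 : ∫ u, h u = 0 := by rw [hI, heq]; ring
    have hae := (integral_eq_zero_iff_of_nonneg (fun u => (hpt u).1) inth).mp h0
    filter_upwards [hae] with u hu
    exact (hpt u).2 hu
  · intro hae
    have hz : h =ᵐ[volume] 0 := by
      filter_upwards [hae] with u hu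
      simp only [hhdef, hu, sub_self, mul_zero, zero_mul, add_zero, Pi.zero_apply]
    have h0 : ∫ u, h u = 0 := by rw [integral_congr_ae hz]; simp
    linarith [hI]
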